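/- Let (X_i)_{i∈ℤ} be a stationary process over a finite alphabet 𝕏 and let K : 𝕏^k → ℝ be any code-length function satisfying the Kraft inequality Σ_{w∈𝕏^k} 2^{−K(w)} ≤ 1. Then for every positive integer n ≥ k, E[K(X_1^k)] − E[H(k, X_1^n)] ≥ H(X_1^k) − H(X_1^k|ℐ) = I(X_1^k; ℐ), the mutual information between the block X_1^k and the shift-invariant σ-algebra ℐ. -/

import Mathlib

open MeasureTheory Filter Real

variable {𝕏 : Type*} [Fintype 𝕏] [Nonempty 𝕏] [DecidableEq 𝕏]
  [MeasurableSpace 𝕏] [MeasurableSingletonClass 𝕏]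

/-- The left shift on two-sided sequences: `(shift ω) i = ω (i + 1)`. -/
def shift (ω : ℤ → 𝕏) : ℤ → 𝕏 := fun i => ω (i + 1)

/-- The block `X_{s+1}^{s+l}` of a sequence `ω`, as a tuple in `𝕏^l`. -/
def blk (s l : ℕ) (ω : ℤ → 𝕏) : Fin l → 𝕏 := fun i => ω ((s : ℤ) + 1 + (i : ℤ))

/-- Shannon entropy (base 2) of a distribution `p` on a finite set:
`H(p) = -∑_{w : p w > 0} p w * log₂ (p w)` (`logb 2 0 = 0`, so zero-mass
points contribute nothing). -/
noncomputable def Hent {A : Type*} [Fintype A] (p : A → ℝ) : ℝ :=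
  -∑ w, p w * Real.logb 2 (p w)

/-- Empirical nonoverlapping-block distribution
`p_k(w, x_1^n) = ⌊n/k⌋⁻¹ ∑_{i=1}^{⌊n/k⌋} 1[x_{(i-1)k+1}^{ik} = w]`. -/
noncomputable def empDist (k n : ℕ) (ω : ℤ → 𝕏) : (Fin k → 𝕏) → ℝ :=
  fun w => (∑ i ∈ Finset.range (n / k), if blk (i * k) k ω = w then (1 : ℝ) else 0) / (n / k : ℕ)

/-- Plug-in estimator `H(k, x_1^n)` of the block entropy. -/
noncomputable def plugIn (k n : ℕ) (ω : ℤ → 𝕏) : ℝ := Hent (empDist k n ω)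

/-- True block distribution `p_k(w) = P(X_1^k = w)`. -/
noncomputable def pblock (μ : Measure (ℤ → 𝕏)) (k : ℕ) : (Fin k → 𝕏) → ℝ :=
  fun w => (μ {ω | blk 0 k ω = w}).toReal

/-- Block entropy `H(k) = H(p_k)`. -/
noncomputable def Hblock (μ : Measure (ℤ → 𝕏)) (k : ℕ) : ℝ := Hent (pblock μ k)

/-- Number `D(k, x_1^n)` of distinct nonoverlapping `k`-blocks in `x_1^n`. -/
noncomputable def Dcount (k n : ℕ) (ω : ℤ → 𝕏) : ℕ :=
  Set.ncard {w : Fin k → 𝕏 | ∃ i < n / k, blk (i * k) k ω = w}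

/-- Length bound `K(k, x_1^n)` of the modified `k`-block code:
`K(k,x_1^n) = 2 log₂ k + (n/k)(H(k,x_1^n) + 2) + 3 k log₂|𝕏| (D(k,x_1^n) + 1)`. -/
noncomputable def Kcode (k n : ℕ) (ω : ℤ → 𝕏) : ℝ :=
  2 * Real.logb 2 k + ((n : ℝ) / k) * (plugIn k n ω + 2)
    + 3 * k * Real.logb 2 (Fintype.card 𝕏) * (Dcount k n ω + 1)

/-- Conditional probability `P(X_1^k = w | ℐ)` given the shift-invariant
σ-algebra `ℐ`, as a function of the sample point. -/
noncomputable def condP (μ : Measure (ℤ → 𝕏)) (k : ℕ) (w : Fin k → 𝕏) : (ℤ → 𝕏) → ℝ :=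
  μ[Set.indicator {ω | blk 0 k ω = w} (fun _ => (1 : ℝ)) | MeasurableSpace.invariants shift]

/-- Conditional block entropy `H(X_1^k | ℐ) = E[-log₂ P(X_1^k = w | ℐ)|_{w = X_1^k}]`. -/
noncomputable def condH (μ : Measure (ℤ → 𝕏)) (k : ℕ) : ℝ :=
  ∫ ω, -Real.logb 2 (condP μ k (blk 0 k ω) ω) ∂μ

/-- `σ(y) = min(2^y, 1)`. -/
noncomputable def sigmaFn (y : ℝ) : ℝ := min ((2 : ℝ) ^ y) 1

/-- Negative part `x⁻ = -x · 1[x < 0]`. -/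
noncomputable def nPart (x : ℝ) : ℝ := if x < 0 then -x else 0

section Aux

/-- Gibbs / cross entropy inequality. -/
lemma gibbs_ineq {A : Type*} [Fintype A] (p q : A → ℝ) (hp : ∀ w, 0 ≤ p w)
    (hps : ∑ w, p w = 1) (hq : ∀ w, 0 ≤ q w) (hqs : ∑ w, q w ≤ 1)
    (hpq : ∀ w, 0 < p w → 0 < q w) :
    Hent p ≤ -∑ w, p w * Real.logb 2 (q w) := by
  have hlog2 : (0:ℝ) < Real.log 2 := Real.log_pos one_lt_two
  have key : ∀ w, p w * Real.logb 2 (q w) - p w * Real.logb 2 (p w)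
      ≤ (q w - p w) / Real.log 2 := by
    intro w
    rcases (hp w).eq_or_lt with h | h
    · rw [← h]
      simpa using div_nonneg (hq w) hlog2.le
    · have hqw : 0 < q w := hpq w h
      have hlogle : Real.log (q w / p w) ≤ q w / p w - 1 :=
        Real.log_le_sub_one_of_pos (by positivity)
      have hlogdiv : Real.log (q w / p w) = Real.log (q w) - Real.log (p w) :=
        Real.log_div hqw.ne' h.ne'
      have : p w * (Real.log (q w) - Real.log (p w)) ≤ q w - p w := by
        rw [← hlogdiv]
        calc p w * Real.log (q w / p w) ≤ p w * (q w / p w - 1) := by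
              exact mul_le_mul_of_nonneg_left hlogle h.le
          _ = q w - p w := by field_simp
      simp only [Real.logb]
      calc p w * (Real.log (q w) / Real.log 2) - p w * (Real.log (p w) / Real.log 2)
          = p w * (Real.log (q w) - Real.log (p w)) / Real.log 2 := by ring
        _ ≤ (q w - p w) / Real.log 2 := by gcongr
  have hsum : ∑ w, (p w * Real.logb 2 (q w) - p w * Real.logb 2 (p w))
      ≤ ∑ w, (q w - p w) / Real.log 2 := Finset.sum_le_sum fun w _ => key w
  rw [Finset.sum_sub_distrib] at hsum
  have : ∑ w, (q w - p w) / Real.log 2 = (∑ w, q w - 1) / Real.log 2 := by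
    rw [← Finset.sum_div, Finset.sum_sub_distrib, hps]
  rw [this] at hsum
  have h2 : (∑ w, q w - 1) / Real.log 2 ≤ 0 := by
    apply div_nonpos_of_nonpos_of_nonneg _ hlog2.le
    linarith
  unfold Hent; linarith

lemma xlogx_le {x : ℝ} (hx : 0 ≤ x) : x * (-Real.logb 2 x) ≤ 1 / Real.log 2 := by
  have hlog2 : (0:ℝ) < Real.log 2 := Real.log_pos one_lt_two
  rcases hx.eq_or_lt with h | h
  · rw [← h]; simp; positivity
  · have h1 : Real.log x⁻¹ ≤ x⁻¹ - 1 := Real.log_le_sub_one_of_pos (by positivity)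
    rw [Real.log_inv] at h1
    have h2 : x * (-Real.log x) ≤ 1 - x := by
      have := mul_le_mul_of_nonneg_left h1 h.le
      calc x * (-Real.log x) ≤ x * (x⁻¹ - 1) := this
        _ = 1 - x := by field_simp
    have h3 : x * (-Real.log x) ≤ 1 := by linarith
    simp only [Real.logb]
    calc x * -(Real.log x / Real.log 2) = x * (-Real.log x) / Real.log 2 := by ring
      _ ≤ 1 / Real.log 2 := div_le_div_of_nonneg_right h3 hlog2.le |>.trans_eq rfl

lemma shift_iterate (j : ℕ) (ω : ℤ → 𝕏) (i : ℤ) : (shift^[j] ω) i = ω (i + j) := by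
  induction j generalizing ω i with
  | zero => simp
  | succ j ih =>
    rw [Function.iterate_succ_apply]
    rw [ih]
    simp only [shift]
    congr 1
    push_cast
    ring

lemma blk_shift (j k : ℕ) (ω : ℤ → 𝕏) : blk 0 k (shift^[j] ω) = blk j k ω := by
  funext i
  simp only [blk, shift_iterate]
  congr 1
  push_cast
  ring




set_option linter.unusedSectionVars false

lemma measurable_blk (s l : ℕ) : Measurable (blk (𝕏 := 𝕏) s l) :=
  measurable_pi_lambda _ fun _ => measurable_pi_apply _

lemma measurableSet_blk_eq (s l : ℕ) (w : Fin l → 𝕏) :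
    MeasurableSet {ω : ℤ → 𝕏 | blk s l ω = w} :=
  measurable_blk s l (measurableSet_singleton w)

lemma integral_comp_blk (μ : Measure (ℤ → 𝕏)) [IsProbabilityMeasure μ] (k : ℕ)
    (f : (Fin k → 𝕏) → ℝ) :
    ∫ ω, f (blk 0 k ω) ∂μ = ∑ w, pblock μ k w * f w := by
  have h : ∀ ω, f (blk 0 k ω)
      = ∑ w, Set.indicator {ω' : ℤ → 𝕏 | blk 0 k ω' = w} (fun _ => f w) ω := by
    intro ω
    simp [Set.indicator_apply, Set.mem_setOf_eq, Finset.sum_ite_eq]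
  calc ∫ ω, f (blk 0 k ω) ∂μ
      = ∫ ω, ∑ w, Set.indicator {ω' : ℤ → 𝕏 | blk 0 k ω' = w} (fun _ => f w) ω ∂μ := by
        simp_rw [h]
    _ = ∑ w, ∫ ω, Set.indicator {ω' : ℤ → 𝕏 | blk 0 k ω' = w} (fun _ => f w) ω ∂μ :=
        integral_finset_sum _ fun w _ =>
          (integrable_const (f w)).indicator (measurableSet_blk_eq 0 k w)
    _ = ∑ w, pblock μ k w * f w := by
        refine Finset.sum_congr rfl fun w _ => ?_
        rw [integral_indicator_const (f w) (measurableSet_blk_eq 0 k w)]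
        simp [pblock, smul_eq_mul, measureReal_def]

lemma pblock_nonneg (μ : Measure (ℤ → 𝕏)) (k : ℕ) (w : Fin k → 𝕏) : 0 ≤ pblock μ k w :=
  ENNReal.toReal_nonneg

lemma pblock_sum (μ : Measure (ℤ → 𝕏)) [IsProbabilityMeasure μ] (k : ℕ) :
    ∑ w, pblock μ k w = 1 := by
  have h := integral_comp_blk μ k (fun _ => (1 : ℝ))
  simpa using h.symm

lemma Hblock_le_code (μ : Measure (ℤ → 𝕏)) [IsProbabilityMeasure μ] (k : ℕ)
    (K : (Fin k → 𝕏) → ℝ) (hKraft : ∑ w, (2 : ℝ) ^ (-(K w)) ≤ 1) :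
    Hblock μ k ≤ ∫ ω, K (blk 0 k ω) ∂μ := by
  have hg := gibbs_ineq (pblock μ k) (fun w => (2 : ℝ) ^ (-(K w)))
    (pblock_nonneg μ k) (pblock_sum μ k)
    (fun w => (Real.rpow_pos_of_pos two_pos _).le) hKraft
    (fun w _ => Real.rpow_pos_of_pos two_pos _)
  have hlog : ∀ w : Fin k → 𝕏, Real.logb 2 ((2 : ℝ) ^ (-(K w))) = -(K w) := fun w =>
    Real.logb_rpow (by norm_num) (by norm_num)
  rw [integral_comp_blk μ k K]
  calc Hblock μ k ≤ -∑ w, pblock μ k w * Real.logb 2 ((2 : ℝ) ^ (-(K w))) := hg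
    _ = ∑ w, pblock μ k w * K w := by
        rw [← Finset.sum_neg_distrib]
        exact Finset.sum_congr rfl fun w _ => by rw [hlog w]; ring

section CondExp

variable {μ : Measure (ℤ → 𝕏)} [IsProbabilityMeasure μ] {k : ℕ}

lemma hm_inv : MeasurableSpace.invariants (shift (𝕏 := 𝕏)) ≤ MeasurableSpace.pi :=
  MeasurableSpace.invariants_le _

/-- the indicator function whose condexp is condP -/
noncomputable def indW (k : ℕ) (w : Fin k → 𝕏) : (ℤ → 𝕏) → ℝ :=
  Set.indicator {ω | blk 0 k ω = w} (fun _ => (1 : ℝ))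

lemma condP_eq (w : Fin k → 𝕏) :
    condP μ k w = μ[indW k w | MeasurableSpace.invariants shift] := rfl

lemma integrable_indW (w : Fin k → 𝕏) : Integrable (indW k w) μ :=
  (integrable_const (1 : ℝ)).indicator (measurableSet_blk_eq 0 k w)

lemma indW_nonneg (w : Fin k → 𝕏) (ω : ℤ → 𝕏) : 0 ≤ indW k w ω :=
  Set.indicator_nonneg (fun _ _ => zero_le_one) ω

lemma stronglyMeasurable_condP (w : Fin k → 𝕏) :
    StronglyMeasurable[MeasurableSpace.invariants (shift (𝕏 := 𝕏))] (condP μ k w) :=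
  stronglyMeasurable_condExp

lemma condP_nonneg (w : Fin k → 𝕏) : 0 ≤ᵐ[μ] condP μ k w :=
  condExp_nonneg (Filter.Eventually.of_forall (indW_nonneg w))

lemma condP_sum_ae : ∀ᵐ ω ∂μ, ∑ w, condP μ k w ω = 1 := by
  have hsum_ind : (∑ w : Fin k → 𝕏, indW k w) = fun _ => (1 : ℝ) := by
    funext ω
    simp [indW, Finset.sum_apply, Set.indicator_apply, Set.mem_setOf_eq, Finset.sum_ite_eq]
  have h1 := condExp_finsetSum (μ := μ) (m := MeasurableSpace.invariants shift)
    (s := Finset.univ) (f := fun w : Fin k → 𝕏 => indW k w) (fun w _ => integrable_indW w)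
  rw [hsum_ind] at h1
  have h2 : μ[(fun _ => (1 : ℝ)) | MeasurableSpace.invariants shift] = fun _ => (1 : ℝ) :=
    condExp_const hm_inv 1
  rw [h2] at h1
  filter_upwards [h1] with ω hω
  rw [← hω.symm]
  simp [Finset.sum_apply, condP_eq]

lemma condP_pos_on (w : Fin k → 𝕏) : ∀ᵐ ω ∂μ, blk 0 k ω = w → 0 < condP μ k w ω := by
  classical
  set s : Set (ℤ → 𝕏) := {ω | condP μ k w ω ≤ 0} with hs_def
  have hs_m : MeasurableSet[MeasurableSpace.invariants (shift (𝕏 := 𝕏))] s :=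
    measurableSet_le (stronglyMeasurable_condP w).measurable measurable_const
  haveI : IsFiniteMeasure (μ.trim (hm_inv (𝕏 := 𝕏))) := isFiniteMeasure_trim _
  have hset := setIntegral_condExp (μ := μ) (hm_inv (𝕏 := 𝕏)) (integrable_indW w) hs_m
  -- hset : ∫ x in s, condP x = ∫ x in s, indW x
  have hls : ∫ x in s, condP μ k w x ∂μ ≤ 0 :=
    setIntegral_nonpos (hm_inv _ hs_m) (fun x hx => hx)
  have hrs : ∫ x in s, indW k w x ∂μ = (μ (s ∩ {ω | blk 0 k ω = w})).toReal := by
    rw [indW, setIntegral_indicator (measurableSet_blk_eq 0 k w)]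
    simp [measureReal_def]
  have hnull : μ (s ∩ {ω | blk 0 k ω = w}) = 0 := by
    have h1 : ((μ (s ∩ {ω | blk 0 k ω = w})).toReal) ≤ 0 := by
      rw [← hrs, ← hset]; exact hls
    have h2 : ((μ (s ∩ {ω | blk 0 k ω = w})).toReal) = 0 :=
      le_antisymm h1 ENNReal.toReal_nonneg
    exact (ENNReal.toReal_eq_zero_iff _).mp h2 |>.resolve_right (measure_ne_top μ _)
  rw [ae_iff]
  refine measure_mono_null ?_ hnull
  intro ω hω
  simp only [Set.mem_setOf_eq] at hω
  push_neg at hω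
  exact ⟨hω.2, hω.1⟩

lemma condP_pos_diag : ∀ᵐ ω ∂μ, 0 < condP μ k (blk 0 k ω) ω := by
  have h := ae_all_iff.mpr (fun w : Fin k → 𝕏 => condP_pos_on (μ := μ) w)
  filter_upwards [h] with ω hω using hω (blk 0 k ω) rfl

end CondExp

lemma invariants_comp_shift {f : (ℤ → 𝕏) → ℝ}
    (hf : StronglyMeasurable[MeasurableSpace.invariants (shift (𝕏 := 𝕏))] f) (ω : ℤ → 𝕏) :
    f (shift ω) = f ω := by
  have hmeas : Measurable[MeasurableSpace.invariants (shift (𝕏 := 𝕏))] f := hf.measurable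
  have hs := hmeas (measurableSet_singleton (f ω))
  rw [MeasurableSpace.measurableSet_invariants] at hs
  have hmem : ω ∈ f ⁻¹' {f ω} := rfl
  have h2 : ω ∈ shift ⁻¹' (f ⁻¹' {f ω}) := by rw [hs.2]; exact hmem
  simpa using h2

lemma invariants_comp_shift_iterate {f : (ℤ → 𝕏) → ℝ}
    (hf : StronglyMeasurable[MeasurableSpace.invariants (shift (𝕏 := 𝕏))] f) (j : ℕ)
    (ω : ℤ → 𝕏) : f (shift^[j] ω) = f ω := by
  induction j with
  | zero => rfl
  | succ j ih => rw [Function.iterate_succ_apply', invariants_comp_shift hf, ih]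

section Integrability

variable {μ : Measure (ℤ → 𝕏)} [IsProbabilityMeasure μ] {k : ℕ}

lemma condP_le_one (w : Fin k → 𝕏) : ∀ᵐ ω ∂μ, condP μ k w ω ≤ 1 := by
  have hle : indW (𝕏 := 𝕏) k w ≤ᵐ[μ] (fun _ => (1 : ℝ)) := by
    refine Filter.Eventually.of_forall fun ω => ?_
    by_cases h : ω ∈ {ω' : ℤ → 𝕏 | blk 0 k ω' = w} <;> simp [indW, Set.indicator_apply, h]
  have h := condExp_mono (m := MeasurableSpace.invariants shift)
    (integrable_indW w) (integrable_const (1 : ℝ)) hle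
  rw [condExp_const hm_inv] at h
  exact h

lemma measurable_neg_logb : Measurable fun x : ℝ => -Real.logb 2 x := by
  simp only [Real.logb]
  exact (Real.measurable_log.div_const _).neg

lemma neg_logb_nonneg {x : ℝ} (h0 : 0 ≤ x) (h1 : x ≤ 1) : 0 ≤ -Real.logb 2 x := by
  rcases h0.eq_or_lt with h | h
  · rw [← h]; simp
  · simpa using neg_nonneg.mpr (Real.logb_nonpos one_lt_two h0 h1)

lemma integrable_hw (w : Fin k → 𝕏) :
    Integrable (fun ω => indW k w ω * (-Real.logb 2 (condP μ k w ω))) μ := by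
  classical
  set φ : ℝ → ℝ := fun x => -Real.logb 2 x with hφ
  have hmeas_cond : Measurable (condP μ k w) :=
    ((stronglyMeasurable_condP w).mono hm_inv).measurable
  have hmeas_ind : Measurable (indW (𝕏 := 𝕏) k w) :=
    measurable_const.indicator (measurableSet_blk_eq 0 k w)
  set F : (ℤ → 𝕏) → ℝ := fun ω => indW k w ω * φ (condP μ k w ω) with hFdef
  have hmeasF : Measurable F := hmeas_ind.mul (measurable_neg_logb.comp hmeas_cond)
  set u : ℕ → (ℤ → 𝕏) → ℝ := fun c ω => indW k w ω * min (φ (condP μ k w ω)) (c : ℝ) with hu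
  set Y : ℕ → (ℤ → 𝕏) → ℝ := fun c ω => min (φ (condP μ k w ω)) (c : ℝ) with hY
  have hmeasY : ∀ c, Measurable (Y c) :=
    fun c => ((measurable_neg_logb.comp hmeas_cond).min measurable_const)
  have hmeasu : ∀ c, Measurable (u c) := fun c => hmeas_ind.mul (hmeasY c)
  have hgood : ∀ᵐ ω ∂μ, 0 ≤ condP μ k w ω ∧ condP μ k w ω ≤ 1 := by
    filter_upwards [condP_nonneg w, condP_le_one w] with ω h0 h1 using ⟨h0, h1⟩
  have hind01 : ∀ ω, indW (𝕏 := 𝕏) k w ω = 0 ∨ indW (𝕏 := 𝕏) k w ω = 1 := by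
    intro ω
    by_cases h : ω ∈ {ω' : ℤ → 𝕏 | blk 0 k ω' = w} <;> simp [indW, Set.indicator_apply, h]
  -- properties on the good set
  have hφnn : ∀ ω, 0 ≤ condP μ k w ω → condP μ k w ω ≤ 1 → 0 ≤ φ (condP μ k w ω) :=
    fun ω h0 h1 => neg_logb_nonneg h0 h1
  -- integrability of u c
  have hint_u : ∀ c : ℕ, Integrable (u c) μ := by
    intro c
    refine Integrable.mono' (integrable_const (c : ℝ))
      (hmeasu c).aestronglyMeasurable ?_
    filter_upwards [hgood] with ω hg
    have h0Y : 0 ≤ Y c ω := le_min (hφnn ω hg.1 hg.2) (Nat.cast_nonneg c)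
    have hYc : Y c ω ≤ (c : ℝ) := min_le_right _ _
    rcases hind01 ω with h | h <;>
      simp only [hu, Real.norm_eq_abs, h, zero_mul, one_mul, abs_zero]
    · positivity
    · rw [abs_of_nonneg h0Y]; exact hYc
  -- uniform bound on ∫ u c
  have hbound_u : ∀ c : ℕ, ∫ ω, u c ω ∂μ ≤ 1 / Real.log 2 := by
    intro c
    have hYsm : StronglyMeasurable[MeasurableSpace.invariants (shift (𝕏 := 𝕏))] (Y c) := by
      have h1 : Measurable[MeasurableSpace.invariants (shift (𝕏 := 𝕏))] (condP μ k w) :=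
        (stronglyMeasurable_condP w).measurable
      exact ((measurable_neg_logb.comp h1).min measurable_const).stronglyMeasurable
    have hYbound : ∀ᵐ ω ∂μ, ‖Y c ω‖ ≤ (c : ℝ) := by
      filter_upwards [hgood] with ω hg
      rw [Real.norm_eq_abs, abs_of_nonneg (le_min (hφnn ω hg.1 hg.2) (Nat.cast_nonneg c))]
      exact min_le_right _ _
    have hint_Yind : Integrable (Y c * indW k w) μ := by
      have := hint_u c
      refine this.congr (Filter.Eventually.of_forall fun ω => ?_)
      simp [hu, hY, Pi.mul_apply, mul_comm]
    haveI : IsFiniteMeasure (μ.trim (hm_inv (𝕏 := 𝕏))) := isFiniteMeasure_trim _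
    have hpull := condExp_stronglyMeasurable_mul_of_bound (hm_inv (𝕏 := 𝕏)) hYsm
      (integrable_indW w) (c : ℝ) hYbound
    have hIc : ∫ ω, u c ω ∂μ = ∫ ω, (Y c * indW k w) ω ∂μ := by
      refine integral_congr_ae (Filter.Eventually.of_forall fun ω => ?_)
      simp [hu, hY, Pi.mul_apply, mul_comm]
    have hI2 : ∫ ω, (Y c * indW k w) ω ∂μ
        = ∫ ω, (μ[Y c * indW k w | MeasurableSpace.invariants shift]) ω ∂μ :=
      (integral_condExp (μ := μ) (hm_inv (𝕏 := 𝕏))).symm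
    have hint_Ycond : Integrable (fun ω => Y c ω * condP μ k w ω) μ := by
      refine Integrable.mono' (integrable_const (c : ℝ))
        ((hmeasY c).mul hmeas_cond).aestronglyMeasurable ?_
      filter_upwards [hgood] with ω hg
      have h0Y : 0 ≤ Y c ω := le_min (hφnn ω hg.1 hg.2) (Nat.cast_nonneg c)
      rw [Real.norm_eq_abs, abs_of_nonneg (mul_nonneg h0Y hg.1)]
      calc Y c ω * condP μ k w ω ≤ (c : ℝ) * 1 :=
            mul_le_mul (min_le_right _ _) hg.2 hg.1 (Nat.cast_nonneg c)
        _ = (c : ℝ) := mul_one _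
    have hI3 : ∫ ω, (μ[Y c * indW k w | MeasurableSpace.invariants shift]) ω ∂μ
        = ∫ ω, Y c ω * condP μ k w ω ∂μ := by
      refine integral_congr_ae ?_
      filter_upwards [hpull] with ω hω
      rw [hω]; rfl
    have hI4 : ∫ ω, Y c ω * condP μ k w ω ∂μ ≤ ∫ _ω, (1 / Real.log 2 : ℝ) ∂μ := by
      refine integral_mono_ae hint_Ycond (integrable_const _) ?_
      filter_upwards [hgood] with ω hg
      calc Y c ω * condP μ k w ω ≤ φ (condP μ k w ω) * condP μ k w ω :=
            mul_le_mul_of_nonneg_right (min_le_left _ _) hg.1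
        _ = condP μ k w ω * (-Real.logb 2 (condP μ k w ω)) := by ring
        _ ≤ 1 / Real.log 2 := xlogx_le hg.1
    rw [hIc, hI2, hI3]
    calc ∫ ω, Y c ω * condP μ k w ω ∂μ ≤ ∫ _ω, (1 / Real.log 2 : ℝ) ∂μ := hI4
      _ = 1 / Real.log 2 := by simp
  -- F is the increasing limit of u c
  have hFu : ∀ᵐ ω ∂μ, ENNReal.ofReal (F ω) = ⨆ c : ℕ, ENNReal.ofReal (u c ω) := by
    filter_upwards [hgood] with ω hg
    have hφo : 0 ≤ φ (condP μ k w ω) := hφnn ω hg.1 hg.2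
    have hindnn : 0 ≤ indW (𝕏 := 𝕏) k w ω := indW_nonneg w ω
    refine le_antisymm ?_ ?_
    · have : F ω = u ⌈φ (condP μ k w ω)⌉₊ ω := by
        simp only [hu, hFdef]
        rw [min_eq_left (Nat.le_ceil _)]
      rw [this]
      exact le_iSup (fun c => ENNReal.ofReal (u c ω)) _
    · refine iSup_le fun c => ENNReal.ofReal_le_ofReal ?_
      exact mul_le_mul_of_nonneg_left (min_le_left _ _) hindnn
  have hmono : ∀ᵐ ω ∂μ, Monotone fun c : ℕ => ENNReal.ofReal (u c ω) := by
    filter_upwards [hgood] with ω hg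
    intro c c' hcc
    refine ENNReal.ofReal_le_ofReal ?_
    exact mul_le_mul_of_nonneg_left
      (min_le_min le_rfl (by exact_mod_cast hcc)) (indW_nonneg w ω)
  have hFnn : ∀ᵐ ω ∂μ, 0 ≤ F ω := by
    filter_upwards [hgood] with ω hg
    exact mul_nonneg (indW_nonneg w ω) (hφnn ω hg.1 hg.2)
  have hunn : ∀ c : ℕ, 0 ≤ᵐ[μ] u c := by
    intro c
    filter_upwards [hgood] with ω hg
    exact mul_nonneg (indW_nonneg w ω) (le_min (hφnn ω hg.1 hg.2) (Nat.cast_nonneg c))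
  have hfin : ∫⁻ ω, ENNReal.ofReal (F ω) ∂μ ≤ ENNReal.ofReal (1 / Real.log 2) := by
    rw [lintegral_congr_ae hFu]
    rw [lintegral_iSup' (fun c => ((hmeasu c).ennreal_ofReal).aemeasurable) hmono]
    refine iSup_le fun c => ?_
    rw [← ofReal_integral_eq_lintegral_ofReal (hint_u c) (hunn c)]
    exact ENNReal.ofReal_le_ofReal (hbound_u c)
  refine ⟨hmeasF.aestronglyMeasurable, ?_⟩
  rw [hasFiniteIntegral_iff_norm]
  calc ∫⁻ ω, ENNReal.ofReal ‖F ω‖ ∂μ = ∫⁻ ω, ENNReal.ofReal (F ω) ∂μ := by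
        refine lintegral_congr_ae ?_
        filter_upwards [hFnn] with ω h
        rw [Real.norm_eq_abs, abs_of_nonneg h]
    _ ≤ ENNReal.ofReal (1 / Real.log 2) := hfin
    _ < ⊤ := ENNReal.ofReal_lt_top

lemma g0_eq (μ : Measure (ℤ → 𝕏)) (k : ℕ) (ω : ℤ → 𝕏) :
    -Real.logb 2 (condP μ k (blk 0 k ω) ω)
      = ∑ w, indW k w ω * (-Real.logb 2 (condP μ k w ω)) := by
  classical
  simp [indW, Set.indicator_apply, Set.mem_setOf_eq, ite_mul, Finset.sum_ite_eq]

lemma integrable_g0 : Integrable (fun ω => -Real.logb 2 (condP μ k (blk 0 k ω) ω)) μ := by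
  have h : (fun ω => -Real.logb 2 (condP μ k (blk 0 k ω) ω))
      = fun ω => ∑ w, indW k w ω * (-Real.logb 2 (condP μ k w ω)) := by
    funext ω; exact g0_eq μ k ω
  rw [h]
  exact integrable_finset_sum _ fun w _ => integrable_hw w

end Integrability




lemma measurable_logb2 : Measurable fun x : ℝ => Real.logb 2 x := by
  simp only [Real.logb]
  exact Real.measurable_log.div_const _

lemma empDist_nonneg (k n : ℕ) (ω : ℤ → 𝕏) (w : Fin k → 𝕏) : 0 ≤ empDist k n ω w := by
  refine div_nonneg (Finset.sum_nonneg fun i _ => ?_) (Nat.cast_nonneg _)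
  split <;> norm_num

lemma empDist_le_one (k n : ℕ) (ω : ℤ → 𝕏) (w : Fin k → 𝕏) : empDist k n ω w ≤ 1 := by
  unfold empDist
  rcases Nat.eq_zero_or_pos (n / k) with h | h
  · simp [h]
  · rw [div_le_one (by exact_mod_cast h)]
    calc (∑ i ∈ Finset.range (n / k), if blk (i * k) k ω = w then (1 : ℝ) else 0)
        ≤ ∑ _i ∈ Finset.range (n / k), (1 : ℝ) := by
          refine Finset.sum_le_sum fun i _ => ?_
          split <;> norm_num
      _ = ((n / k : ℕ) : ℝ) := by simp

lemma empDist_sum (k n : ℕ) (hm1 : 1 ≤ n / k) (ω : ℤ → 𝕏) : ∑ w, empDist k n ω w = 1 := by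
  classical
  unfold empDist
  rw [← Finset.sum_div]
  rw [Finset.sum_comm]
  have : ∀ i ∈ Finset.range (n / k),
      (∑ w : Fin k → 𝕏, if blk (i * k) k ω = w then (1 : ℝ) else 0) = 1 := by
    intro i _
    simp [Finset.sum_ite_eq]
  rw [Finset.sum_congr rfl this]
  have hpos : (0 : ℝ) < (n / k : ℕ) := by exact_mod_cast hm1
  field_simp
  simp

lemma plugIn_le_avg (k n : ℕ) (hm1 : 1 ≤ n / k) (ω : ℤ → 𝕏) (q : (Fin k → 𝕏) → ℝ)
    (hq : ∀ w, 0 ≤ q w) (hqs : ∑ w, q w ≤ 1)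
    (hqpos : ∀ i ∈ Finset.range (n / k), 0 < q (blk (i * k) k ω)) :
    plugIn k n ω ≤
      (((n / k : ℕ) : ℝ))⁻¹ * ∑ i ∈ Finset.range (n / k), -Real.logb 2 (q (blk (i * k) k ω)) := by
  classical
  have hmpos : (0 : ℝ) < ((n / k : ℕ) : ℝ) := by exact_mod_cast hm1
  have hpq : ∀ w, 0 < empDist k n ω w → 0 < q w := by
    intro w hw
    by_contra hqw
    have hzero : ∀ i ∈ Finset.range (n / k), ¬(blk (i * k) k ω = w) := by
      intro i hi heq
      exact hqw (heq ▸ hqpos i hi)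
    have : empDist k n ω w = 0 := by
      unfold empDist
      rw [Finset.sum_congr rfl (fun i hi => if_neg (hzero i hi))]
      simp
    rw [this] at hw; exact lt_irrefl 0 hw
  have hg := gibbs_ineq (empDist k n ω) q (empDist_nonneg k n ω) (empDist_sum k n hm1 ω)
    hq hqs hpq
  refine hg.trans_eq ?_
  unfold empDist
  rw [← Finset.sum_neg_distrib]
  rw [Finset.mul_sum]
  have hterm : ∀ x : Fin k → 𝕏,
      -((∑ i ∈ Finset.range (n / k), if blk (i * k) k ω = x then (1 : ℝ) else 0) / (n / k : ℕ)
          * Real.logb 2 (q x))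
      = ∑ i ∈ Finset.range (n / k),
          (if blk (i * k) k ω = x then (((n / k : ℕ) : ℝ))⁻¹ * -Real.logb 2 (q x) else 0) := by
    intro x
    rw [div_eq_mul_inv, Finset.sum_mul, Finset.sum_mul, ← Finset.sum_neg_distrib]
    refine Finset.sum_congr rfl fun i _ => ?_
    split <;> ring
  rw [Finset.sum_congr rfl fun x _ => hterm x, Finset.sum_comm]
  refine Finset.sum_congr rfl fun i _ => ?_
  rw [Finset.sum_ite_eq]
  simp

lemma integrable_plugIn (μ : Measure (ℤ → 𝕏)) [IsProbabilityMeasure μ] (k n : ℕ) :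
    Integrable (plugIn k n) μ := by
  classical
  have hmeas_e : ∀ w : Fin k → 𝕏, Measurable (fun ω => empDist k n ω w) := by
    intro w
    unfold empDist
    refine Measurable.div_const ?_ _
    exact Finset.measurable_sum _ fun i _ =>
      Measurable.ite (measurableSet_blk_eq (i * k) k w) measurable_const measurable_const
  have hmeas : Measurable (plugIn (𝕏 := 𝕏) k n) := by
    unfold plugIn Hent
    refine Measurable.neg ?_
    exact Finset.measurable_sum _ fun w _ =>
      (hmeas_e w).mul (measurable_logb2.comp (hmeas_e w))
  refine Integrable.mono' (integrable_const ((Fintype.card (Fin k → 𝕏) : ℝ) * (1 / Real.log 2)))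
    hmeas.aestronglyMeasurable (Filter.Eventually.of_forall fun ω => ?_)
  unfold plugIn Hent
  rw [Real.norm_eq_abs, abs_neg]
  calc |∑ w, empDist k n ω w * Real.logb 2 (empDist k n ω w)|
      ≤ ∑ w, |empDist k n ω w * Real.logb 2 (empDist k n ω w)| := Finset.abs_sum_le_sum_abs _ _
    _ ≤ ∑ _w : Fin k → 𝕏, (1 / Real.log 2) := by
        refine Finset.sum_le_sum fun w _ => ?_
        have h0 := empDist_nonneg k n ω w
        have h1 := empDist_le_one k n ω w
        have hnp : empDist k n ω w * Real.logb 2 (empDist k n ω w) ≤ 0 :=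
          mul_nonpos_of_nonneg_of_nonpos h0 (Real.logb_nonpos one_lt_two h0 h1)
        rw [abs_of_nonpos hnp]
        have := xlogx_le h0
        nlinarith [this]
    _ = (Fintype.card (Fin k → 𝕏) : ℝ) * (1 / Real.log 2) := by
        rw [Finset.sum_const, Finset.card_univ, nsmul_eq_mul]

section Final

variable {μ : Measure (ℤ → 𝕏)} [IsProbabilityMeasure μ] {k : ℕ}

lemma g_shift_eq (j : ℕ) :
    (fun ω => -Real.logb 2 (condP μ k (blk j k ω) ω))
      = (fun ω => -Real.logb 2 (condP μ k (blk 0 k ω) ω)) ∘ (shift^[j]) := by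
  funext ω
  have h1 : blk 0 k (shift^[j] ω) = blk j k ω := blk_shift j k ω
  have h2 : condP μ k (blk j k ω) (shift^[j] ω) = condP μ k (blk j k ω) ω :=
    invariants_comp_shift_iterate (stronglyMeasurable_condP _) j ω
  simp only [Function.comp_apply, h1, h2]

lemma integrable_gj (hstat : MeasurePreserving (shift (𝕏 := 𝕏)) μ μ) (j : ℕ) :
    Integrable (fun ω => -Real.logb 2 (condP μ k (blk j k ω) ω)) μ := by
  rw [g_shift_eq (μ := μ) (k := k) j]
  have hMP : MeasurePreserving (shift^[j] : (ℤ → 𝕏) → (ℤ → 𝕏)) μ μ := hstat.iterate j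
  have h1 : Integrable (fun ω => -Real.logb 2 (condP μ k (blk 0 k ω) ω))
      (Measure.map (shift^[j]) μ) := by
    rw [hMP.map_eq]; exact integrable_g0
  exact (integrable_map_measure h1.aestronglyMeasurable
    hMP.measurable.aemeasurable).mp h1

lemma integral_gj (hstat : MeasurePreserving (shift (𝕏 := 𝕏)) μ μ) (j : ℕ) :
    ∫ ω, -Real.logb 2 (condP μ k (blk j k ω) ω) ∂μ = condH μ k := by
  rw [g_shift_eq (μ := μ) (k := k) j]
  have hMP : MeasurePreserving (shift^[j] : (ℤ → 𝕏) → (ℤ → 𝕏)) μ μ := hstat.iterate j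
  have hsm : AEStronglyMeasurable (fun ω => -Real.logb 2 (condP μ k (blk 0 k ω) ω))
      (Measure.map (shift^[j]) μ) := by
    rw [hMP.map_eq]; exact integrable_g0.aestronglyMeasurable
  calc ∫ ω, ((fun ω => -Real.logb 2 (condP μ k (blk 0 k ω) ω)) ∘ (shift^[j])) ω ∂μ
      = ∫ ω, -Real.logb 2 (condP μ k (blk 0 k ω) ω) ∂(Measure.map (shift^[j]) μ) :=
        (integral_map hMP.measurable.aemeasurable hsm).symm
    _ = condH μ k := by rw [hMP.map_eq]; rfl

lemma condP_pos_blk (hstat : MeasurePreserving (shift (𝕏 := 𝕏)) μ μ) (j : ℕ) :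
    ∀ᵐ ω ∂μ, 0 < condP μ k (blk j k ω) ω := by
  have hQMP := (hstat.iterate j).quasiMeasurePreserving
  have h := hQMP.ae (condP_pos_diag (μ := μ) (k := k))
  filter_upwards [h] with ω hω
  rwa [blk_shift, invariants_comp_shift_iterate (stronglyMeasurable_condP _) j ω] at hω

theorem main_result
    (hstat : MeasurePreserving (shift (𝕏 := 𝕏)) μ μ)
    (n : ℕ) (hk : 0 < k) (hkn : k ≤ n)
    (K : (Fin k → 𝕏) → ℝ)
    (hKraft : ∑ w, (2 : ℝ) ^ (-(K w)) ≤ 1) :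
    Hblock μ k - condH μ k ≤
      (∫ ω, K (blk 0 k ω) ∂μ) - ∫ ω, plugIn k n ω ∂μ := by
  classical
  have hm1 : 1 ≤ n / k := (Nat.one_le_div_iff hk).mpr hkn
  have hmpos : (0 : ℝ) < ((n / k : ℕ) : ℝ) := by exact_mod_cast hm1
  have hstep1 : Hblock μ k ≤ ∫ ω, K (blk 0 k ω) ∂μ := Hblock_le_code μ k K hKraft
  set G : (ℤ → 𝕏) → ℝ := fun ω =>
    (((n / k : ℕ) : ℝ))⁻¹ * ∑ i ∈ Finset.range (n / k),
      -Real.logb 2 (condP μ k (blk (i * k) k ω) ω) with hG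
  have hae : ∀ᵐ ω ∂μ, plugIn k n ω ≤ G ω := by
    have hnnall : ∀ᵐ ω ∂μ, ∀ w : Fin k → 𝕏, 0 ≤ condP μ k w ω :=
      ae_all_iff.mpr fun w => condP_nonneg w
    have hposall : ∀ᵐ ω ∂μ, ∀ i : ℕ, 0 < condP μ k (blk (i * k) k ω) ω :=
      ae_all_iff.mpr fun i => condP_pos_blk hstat (i * k)
    filter_upwards [hnnall, condP_sum_ae (μ := μ) (k := k), hposall] with ω hnn hsum hpos
    exact plugIn_le_avg k n hm1 ω (fun w => condP μ k w ω) hnn hsum.le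
      (fun i _ => hpos i)
  have hintG : Integrable G μ := by
    rw [hG]
    exact (integrable_finset_sum _ fun i _ => integrable_gj hstat (i * k)).const_mul _
  have h2 : ∫ ω, plugIn k n ω ∂μ ≤ ∫ ω, G ω ∂μ :=
    integral_mono_ae (integrable_plugIn μ k n) hintG hae
  have h3 : ∫ ω, G ω ∂μ = condH μ k := by
    rw [hG]
    rw [integral_const_mul]
    rw [integral_finset_sum _ fun i _ => integrable_gj hstat (i * k)]
    rw [Finset.sum_congr rfl fun i _ => integral_gj hstat (i * k)]
    rw [Finset.sum_const, Finset.card_range, nsmul_eq_mul]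
    field_simp
  rw [h3] at h2
  linarith

end Final

end Aux

/-- For a stationary process over a finite alphabet and any code-length
function `K : 𝕏^k → ℝ` satisfying the Kraft inequality `∑_w 2^{−K(w)} ≤ 1`,
for every `n ≥ k`,
`E[K(X_1^k)] − E[H(k, X_1^n)] ≥ H(X_1^k) − H(X_1^k|ℐ) = I(X_1^k; ℐ)`. -/
theorem expected_code_minus_plugIn_ge_mutualInformation
    {μ : Measure (ℤ → 𝕏)} [IsProbabilityMeasure μ]
    (hstat : MeasurePreserving shift μ μ)
    (k n : ℕ) (hk : 0 < k) (hkn : k ≤ n)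
    (K : (Fin k → 𝕏) → ℝ)
    (hKraft : ∑ w, (2 : ℝ) ^ (-(K w)) ≤ 1) :
    Hblock μ k - condH μ k ≤
      (∫ ω, K (blk 0 k ω) ∂μ) - ∫ ω, plugIn k n ω ∂μ := by
  exact main_result hstat n hk hkn K hKraft
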